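/- arXiv:2603.10733 — 2 statements merged into one kernel-verified Lean document; each statement's English description precedes it below -/
import Mathlib

section
/- Over the alphabet {a, a+1} (i.e., b = a + 1), the empty word ε is the unique short strong bispecial f-smooth word, and there is no short weak bispecial f-smooth word. -/
namespace SmoothWords

/-- Complement of a letter over the alphabet `{a, b}`. -/
def flip (a b c : ℕ) : ℕ := if c = a then b else a

/-- Run-length encoding of a finite word: list of (letter, exponent) pairs. -/
def runs : List ℕ → List (ℕ × ℕ)
  | [] => []
  | c :: t =>
    match runs t with
    | [] => [(c, 1)]
    | (d, k) :: r => if c = d then (c, k + 1) :: r else (c, 1) :: (d, k) :: r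

/-- The exponents of the canonical run-length factorization. -/
def exps (u : List ℕ) : List ℕ := (runs u).map Prod.snd

/-- Boundary cut used by the finite derivatives. -/
def cut (a b p : ℕ) : List ℕ := if p ≤ a then [] else [b]

/-- The finite derivative `D_f`. -/
def Df (a b : ℕ) (u : List ℕ) : List ℕ :=
  match exps u with
  | [] => []
  | [p] => cut a b p
  | p :: q :: rest =>
      cut a b p ++ (q :: rest).dropLast ++ cut a b ((q :: rest).getLast (List.cons_ne_nil _ _))

/-- `u` is f-derivable: letters in `{a,b}`, inner run exponents in `{a,b}`,
boundary run exponents in `[1, b]`. -/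
def Cf1 (a b : ℕ) (u : List ℕ) : Prop :=
  (∀ c ∈ u, c = a ∨ c = b) ∧
  (∀ p ∈ exps u, p ≤ b) ∧
  (∀ p ∈ ((exps u).drop 1).dropLast, p = a ∨ p = b)

/-- `u` is f-smooth: all iterated finite derivatives are f-derivable
(equivalently, some iterate is `ε`). -/
def FSmooth (a b : ℕ) (u : List ℕ) : Prop := ∀ n, Cf1 a b ((Df a b)^[n] u)

/-- The r-derivative `D_r`: keeps all exponents but cuts the last one. -/
def Dr (a b : ℕ) (u : List ℕ) : List ℕ :=
  match exps u with
  | [] => []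
  | p :: rest =>
      (p :: rest).dropLast ++ cut a b ((p :: rest).getLast (List.cons_ne_nil _ _))

/-- `u` is r-derivable. -/
def Cr1 (a b : ℕ) (u : List ℕ) : Prop :=
  (∀ c ∈ u, c = a ∨ c = b) ∧
  (∀ p ∈ exps u, p ≤ b) ∧
  (∀ p ∈ (exps u).dropLast, p = a ∨ p = b)

/-- `u` is r-smooth. -/
def RSmooth (a b : ℕ) (u : List ℕ) : Prop := ∀ n, Cr1 a b ((Dr a b)^[n] u)

/-- `y` is the derivative of the infinite word `x`: `x = x₀^{y₀} x̄₀^{y₁} x₀^{y₂} ⋯`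
with all `y i ∈ {a, b}` (in particular `x` is derivable). -/
def DerivesTo (a b : ℕ) (x y : ℕ → ℕ) : Prop :=
  (∀ i, y i = a ∨ y i = b) ∧
  ∃ S : ℕ → ℕ, S 0 = 0 ∧ (∀ k, S (k + 1) = S k + y k) ∧
    ∀ k i, S k ≤ i → i < S (k + 1) → x i = (flip a b)^[k] (x 0)

/-- An infinite word over `{a,b}` is smooth if it is infinitely derivable. -/
def Smooth (a b : ℕ) (x : ℕ → ℕ) : Prop :=
  (∀ i, x i = a ∨ x i = b) ∧
  ∃ X : ℕ → ℕ → ℕ, X 0 = x ∧ ∀ n, DerivesTo a b (X n) (X (n + 1))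

/-- Auxiliary for the f-primitives: alternate blocks with given exponents,
ending with a block of exponent `a`. -/
def pfAux (a b : ℕ) : ℕ → List ℕ → List ℕ
  | c, [] => List.replicate a c
  | c, p :: t => List.replicate p c ++ pfAux a b (flip a b c) t

/-- The f-primitive `P_{f,c}`. -/
def Pf (a b c : ℕ) (u : List ℕ) : List ℕ :=
  if c = a then List.replicate a a ++ pfAux a b b u
  else (List.replicate a a ++ pfAux a b b u).map (flip a b)

/-- `u` is a bispecial f-smooth word. -/
def Bispecial (a b : ℕ) (u : List ℕ) : Prop :=
  FSmooth a b u ∧ FSmooth a b (a :: u) ∧ FSmooth a b (b :: u) ∧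
    FSmooth a b (u ++ [a]) ∧ FSmooth a b (u ++ [b])

open Classical in
/-- The multiplicity `m(u) = |{aua,aub,bua,bub} ∩ C_f^∞| - 3`. -/
noncomputable def mult (a b : ℕ) (u : List ℕ) : ℤ :=
  (if FSmooth a b (a :: u ++ [a]) then 1 else 0) +
  (if FSmooth a b (a :: u ++ [b]) then 1 else 0) +
  (if FSmooth a b (b :: u ++ [a]) then 1 else 0) +
  (if FSmooth a b (b :: u ++ [b]) then 1 else 0) - 3

/-- The vertex of the tree `T` indexed by the path `s` from the root `ε`
(`false` = child by `P_{f,a}`, `true` = child by `P_{f,b}`). -/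
def node (a b : ℕ) : List Bool → List ℕ
  | [] => []
  | c :: s => Pf a b (if c then b else a) (node a b s)

/-- Total length `f(i) = ∑_{u ∈ T_i} |u|` of generation `i` of `T`. -/
def totalLen (a b i : ℕ) : ℕ :=
  ∑ s : Fin i → Bool, (node a b (List.ofFn s)).length

/-- Generation `i` of the tree `T`, as a finite set of words. -/
def genSet (a b i : ℕ) : Finset (List ℕ) :=
  (Finset.univ : Finset (Fin i → Bool)).image fun s => node a b (List.ofFn s)

/-- `b_i(n) = |T_i ∩ A^n|`. -/
def bfun (a b i n : ℕ) : ℕ := ((genSet a b i).filter fun u => u.length = n).card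

/-- `s_i(n) = ∑_{m<n} b_i(m)`. -/
def sfun (a b i n : ℕ) : ℕ := ∑ m ∈ Finset.range n, bfun a b i m

/-- `p_i(n) = ∑_{m<n} s_i(m)`. -/
def pfun (a b i n : ℕ) : ℕ := ∑ m ∈ Finset.range n, sfun a b i m

/-- `p(n) = ∑_i p_i(n)`. -/
noncomputable def pTot (a b n : ℕ) : ℝ := ∑' i : ℕ, (pfun a b i n : ℝ)

/-- `l_i`, the minimal length of a word of generation `i` of `T`. -/
noncomputable def li (a b i : ℕ) : ℕ :=
  sInf {m | ∃ s : Fin i → Bool, (node a b (List.ofFn s)).length = m}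

/-- `u` is a factor of the infinite word `x`. -/
def FactorOf (u : List ℕ) (x : ℕ → ℕ) : Prop :=
  ∃ i, u = (List.range u.length).map fun j => x (i + j)


section Aux

variable {a : ℕ}

lemma runs_cons (x : ℕ) (t : List ℕ) :
    runs (x :: t) = match runs t with
      | [] => [(x, 1)]
      | (d, k) :: r => if x = d then (x, k + 1) :: r else (x, 1) :: (d, k) :: r := by
  simp only [runs]

lemma runs_rep (c : ℕ) : ∀ n, runs (List.replicate (n+1) c) = [(c, n+1)]
  | 0 => by simp [runs]
  | n+1 => by
    rw [List.replicate_succ, runs_cons, runs_rep c n]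
    simp

lemma runs_rep_app {c d : ℕ} (h : c ≠ d) :
    ∀ n, runs (List.replicate (n+1) c ++ [d]) = [(c, n+1), (d, 1)]
  | 0 => by simp [runs, h]
  | n+1 => by
    rw [List.replicate_succ, List.cons_append, runs_cons, runs_rep_app h n]
    simp [h]

lemma exps_rep (c n : ℕ) : exps (List.replicate (n+1) c) = [n+1] := by
  simp [exps, runs_rep]

lemma exps_rep_app {c d : ℕ} (h : c ≠ d) (n : ℕ) :
    exps (List.replicate (n+1) c ++ [d]) = [n+1, 1] := by
  simp [exps, runs_rep_app h]

lemma exps_cons_rep {c d : ℕ} (h : d ≠ c) (n : ℕ) :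
    exps (d :: List.replicate (n+1) c) = [1, n+1] := by
  rw [exps, runs_cons, runs_rep]
  simp [h, exps, runs]

lemma exps_cons_rep_app {c d : ℕ} (h : c ≠ d) (n : ℕ) :
    exps (d :: (List.replicate (n+1) c ++ [d])) = [1, n+1, 1] := by
  rw [exps, runs_cons, runs_rep_app h]
  simp [Ne.symm h]

lemma Df_nil : Df a (a+1) [] = [] := by simp [Df, exps, runs]

lemma cf1_nil : Cf1 a (a+1) [] := by
  refine ⟨by simp, by simp [exps, runs], by simp [exps, runs]⟩

lemma fsmooth_nil : FSmooth a (a+1) [] := fun n => by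
  rw [Function.iterate_fixed Df_nil n]; exact cf1_nil

lemma fsmooth_step {u : List ℕ} (h1 : Cf1 a (a+1) u)
    (h2 : FSmooth a (a+1) (Df a (a+1) u)) : FSmooth a (a+1) u := by
  intro n
  cases n with
  | zero => exact h1
  | succ m => rw [Function.iterate_succ_apply]; exact h2 m

lemma fsmooth_single (ha : 1 ≤ a) {c : ℕ} (hc : c = a ∨ c = a+1) :
    FSmooth a (a+1) [c] := by
  apply fsmooth_step
  · refine ⟨by simpa using hc, ?_, ?_⟩
    · intro p hp
      simp [exps, runs] at hp
      omega
    · simp [exps, runs]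
  · have h : Df a (a+1) [c] = [] := by simp [Df, exps, runs, cut, ha]
    rw [h]; exact fsmooth_nil

lemma fsmooth_cut (ha : 1 ≤ a) (p : ℕ) : FSmooth a (a+1) (cut a (a+1) p) := by
  unfold cut
  split
  · exact fsmooth_nil
  · exact fsmooth_single ha (Or.inr rfl)

lemma fsmooth_rep (ha : 1 ≤ a) {c : ℕ} (hc : c = a ∨ c = a+1) {m : ℕ}
    (hm : m + 1 ≤ a + 1) : FSmooth a (a+1) (List.replicate (m+1) c) := by
  apply fsmooth_step
  · refine ⟨?_, ?_, ?_⟩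
    · intro x hx
      rw [List.eq_of_mem_replicate hx]; exact hc
    · rw [exps_rep]; intro p hp; simp at hp; omega
    · rw [exps_rep]; simp
  · have h : Df a (a+1) (List.replicate (m+1) c) = cut a (a+1) (m+1) := by
      simp [Df, exps_rep]
    rw [h]; exact fsmooth_cut ha _

lemma fsmooth_rep_bound {c m : ℕ} (h : FSmooth a (a+1) (List.replicate (m+1) c)) :
    m + 1 ≤ a + 1 := by
  have h0 := (h 0).2.1
  rw [Function.iterate_zero, id, exps_rep] at h0
  exact h0 _ (by simp)

lemma fsmooth_two (ha : 1 ≤ a) {x y : ℕ} (hx : x = a ∨ x = a+1)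
    (hy : y = a ∨ y = a+1) (hxy : x ≠ y) {m : ℕ} (hm : m + 1 ≤ a + 1) :
    FSmooth a (a+1) (List.replicate (m+1) x ++ [y]) := by
  apply fsmooth_step
  · refine ⟨?_, ?_, ?_⟩
    · intro z hz
      rcases List.mem_append.1 hz with h | h
      · rw [List.eq_of_mem_replicate h]; exact hx
      · simp at h; rw [h]; exact hy
    · rw [exps_rep_app hxy]; intro p hp; simp at hp; omega
    · rw [exps_rep_app hxy]; simp
  · have h : Df a (a+1) (List.replicate (m+1) x ++ [y]) =
        cut a (a+1) (m+1) ++ cut a (a+1) 1 := by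
      simp [Df, exps_rep_app hxy]
    rw [h]
    have h1 : cut a (a+1) 1 = [] := by simp [cut, ha]
    rw [h1, List.append_nil]
    exact fsmooth_cut ha _

lemma fsmooth_two' (ha : 1 ≤ a) {x y : ℕ} (hx : x = a ∨ x = a+1)
    (hy : y = a ∨ y = a+1) (hxy : y ≠ x) {m : ℕ} (hm : m + 1 ≤ a + 1) :
    FSmooth a (a+1) (y :: List.replicate (m+1) x) := by
  apply fsmooth_step
  · refine ⟨?_, ?_, ?_⟩
    · intro z hz
      rcases List.mem_cons.1 hz with h | h
      · rw [h]; exact hy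
      · rw [List.eq_of_mem_replicate h]; exact hx
    · rw [exps_cons_rep hxy]; intro p hp; simp at hp; omega
    · rw [exps_cons_rep hxy]; simp
  · have h : Df a (a+1) (y :: List.replicate (m+1) x) =
        cut a (a+1) 1 ++ cut a (a+1) (m+1) := by
      simp [Df, exps_cons_rep hxy]
    rw [h]
    have h1 : cut a (a+1) 1 = [] := by simp [cut, ha]
    rw [h1, List.nil_append]
    exact fsmooth_cut ha _

lemma fsmooth_three (ha : 1 ≤ a) {x y : ℕ} (hx : x = a ∨ x = a+1)
    (hy : y = a ∨ y = a+1) (hxy : x ≠ y) {m : ℕ} (hm : m + 1 = a) :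
    FSmooth a (a+1) (y :: (List.replicate (m+1) x ++ [y])) := by
  apply fsmooth_step
  · refine ⟨?_, ?_, ?_⟩
    · intro z hz
      rcases List.mem_cons.1 hz with h | h
      · rw [h]; exact hy
      · rcases List.mem_append.1 h with h | h
        · rw [List.eq_of_mem_replicate h]; exact hx
        · simp at h; rw [h]; exact hy
    · rw [exps_cons_rep_app hxy]; intro p hp; simp at hp; omega
    · rw [exps_cons_rep_app hxy]; simp; omega
  · have h : Df a (a+1) (y :: (List.replicate (m+1) x ++ [y])) =
        cut a (a+1) 1 ++ [m+1] ++ cut a (a+1) 1 := by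
      simp [Df, exps_cons_rep_app hxy]
    have h1 : cut a (a+1) 1 = [] := by simp [cut, ha]
    rw [h, h1]
    simp only [List.nil_append, List.append_nil]
    exact fsmooth_single ha (Or.inl hm)

lemma not_fsmooth_three {x y : ℕ} (hxy : x ≠ y) {m : ℕ} (hm : m + 1 < a)
    (h : FSmooth a (a+1) (y :: (List.replicate (m+1) x ++ [y]))) : False := by
  have h0 := (h 0).2.2
  rw [Function.iterate_zero, id, exps_cons_rep_app hxy] at h0
  have := h0 (m+1) (by simp)
  omega

end Aux

lemma bisp_nil (ha : 1 ≤ a) : Bispecial a (a+1) [] := by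
  refine ⟨fsmooth_nil, ?_, ?_, ?_, ?_⟩
  · exact fsmooth_single ha (Or.inl rfl)
  · exact fsmooth_single ha (Or.inr rfl)
  · exact fsmooth_single ha (Or.inl rfl)
  · exact fsmooth_single ha (Or.inr rfl)

lemma mult_nil (ha : 1 ≤ a) : mult a (a+1) ([] : List ℕ) = 1 := by
  have h1 : FSmooth a (a+1) (a :: ([] : List ℕ) ++ [a]) :=
    fsmooth_rep ha (Or.inl rfl) (m := 1) (by omega)
  have h2 : FSmooth a (a+1) (a :: ([] : List ℕ) ++ [a+1]) :=
    fsmooth_two ha (Or.inl rfl) (Or.inr rfl) (by omega) (m := 0) (by omega)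
  have h3 : FSmooth a (a+1) ((a+1) :: ([] : List ℕ) ++ [a]) :=
    fsmooth_two ha (Or.inr rfl) (Or.inl rfl) (by omega) (m := 0) (by omega)
  have h4 : FSmooth a (a+1) ((a+1) :: ([] : List ℕ) ++ [a+1]) :=
    fsmooth_rep ha (Or.inr rfl) (m := 1) (by omega)
  unfold mult
  rw [if_pos h1, if_pos h2, if_pos h3, if_pos h4]
  norm_num

lemma mult_rep_a (ha : 1 ≤ a) {m : ℕ} (hm : m + 1 ≤ a) :
    mult a (a+1) (List.replicate (m+1) a) = 0 := by
  have e1 : a :: List.replicate (m+1) a ++ [a] = List.replicate (m+1+1+1) a := by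
    rw [← List.replicate_succ, ← List.replicate_succ']
  have e2 : a :: List.replicate (m+1) a ++ [a+1] =
      List.replicate (m+1+1) a ++ [a+1] := by
    rw [← List.replicate_succ]
  have e3 : (a+1) :: List.replicate (m+1) a ++ [a] =
      (a+1) :: List.replicate (m+1+1) a := by
    rw [List.cons_append, ← List.replicate_succ']
  have e4 : (a+1) :: List.replicate (m+1) a ++ [a+1] =
      (a+1) :: (List.replicate (m+1) a ++ [a+1]) := List.cons_append
  have h2 : FSmooth a (a+1) (List.replicate (m+1+1) a ++ [a+1]) :=
    fsmooth_two ha (Or.inl rfl) (Or.inr rfl) (by omega) (by omega)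
  have h3 : FSmooth a (a+1) ((a+1) :: List.replicate (m+1+1) a) :=
    fsmooth_two' ha (Or.inl rfl) (Or.inr rfl) (by omega) (by omega)
  unfold mult
  rw [e1, e2, e3, e4, if_pos h2, if_pos h3]
  by_cases h : m + 1 = a
  · have h4 : FSmooth a (a+1) ((a+1) :: (List.replicate (m+1) a ++ [a+1])) :=
      fsmooth_three ha (Or.inl rfl) (Or.inr rfl) (by omega) h
    have h1 : ¬ FSmooth a (a+1) (List.replicate (m+1+1+1) a) := fun hf => by
      have := fsmooth_rep_bound hf; omega
    rw [if_neg h1, if_pos h4]; norm_num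
  · have h4 : ¬ FSmooth a (a+1) ((a+1) :: (List.replicate (m+1) a ++ [a+1])) :=
      fun hf => not_fsmooth_three (by omega) (by omega) hf
    have h1 : FSmooth a (a+1) (List.replicate (m+1+1+1) a) :=
      fsmooth_rep ha (Or.inl rfl) (by omega)
    rw [if_pos h1, if_neg h4]; norm_num

lemma mult_rep_b (ha : 1 ≤ a) {m : ℕ} (hm : m + 1 ≤ a) :
    mult a (a+1) (List.replicate (m+1) (a+1)) = 0 := by
  have e1 : a :: List.replicate (m+1) (a+1) ++ [a] =
      a :: (List.replicate (m+1) (a+1) ++ [a]) := List.cons_append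
  have e2 : a :: List.replicate (m+1) (a+1) ++ [a+1] =
      a :: List.replicate (m+1+1) (a+1) := by
    rw [List.cons_append, ← List.replicate_succ']
  have e3 : (a+1) :: List.replicate (m+1) (a+1) ++ [a] =
      List.replicate (m+1+1) (a+1) ++ [a] := by
    rw [← List.replicate_succ]
  have e4 : (a+1) :: List.replicate (m+1) (a+1) ++ [a+1] =
      List.replicate (m+1+1+1) (a+1) := by
    rw [← List.replicate_succ, ← List.replicate_succ']
  have h2 : FSmooth a (a+1) (a :: List.replicate (m+1+1) (a+1)) :=
    fsmooth_two' ha (Or.inr rfl) (Or.inl rfl) (by omega) (by omega)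
  have h3 : FSmooth a (a+1) (List.replicate (m+1+1) (a+1) ++ [a]) :=
    fsmooth_two ha (Or.inr rfl) (Or.inl rfl) (by omega) (by omega)
  unfold mult
  rw [e1, e2, e3, e4, if_pos h2, if_pos h3]
  by_cases h : m + 1 = a
  · have h1 : FSmooth a (a+1) (a :: (List.replicate (m+1) (a+1) ++ [a])) :=
      fsmooth_three ha (Or.inr rfl) (Or.inl rfl) (by omega) h
    have h4 : ¬ FSmooth a (a+1) (List.replicate (m+1+1+1) (a+1)) := fun hf => by
      have := fsmooth_rep_bound hf; omega
    rw [if_pos h1, if_neg h4]; norm_num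
  · have h1 : ¬ FSmooth a (a+1) (a :: (List.replicate (m+1) (a+1) ++ [a])) :=
      fun hf => not_fsmooth_three (by omega) (by omega) hf
    have h4 : FSmooth a (a+1) (List.replicate (m+1+1+1) (a+1)) :=
      fsmooth_rep ha (Or.inr rfl) (by omega)
    rw [if_neg h1, if_pos h4]; norm_num

theorem stmt9 (a : ℕ) (ha : 1 ≤ a) (c n : ℕ) (hc : c = a ∨ c = a + 1) :
    ((Bispecial a (a + 1) (List.replicate n c) ∧
        mult a (a + 1) (List.replicate n c) = 1) ↔ n = 0) ∧
    ¬ (Bispecial a (a + 1) (List.replicate n c) ∧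
        mult a (a + 1) (List.replicate n c) = -1) := by
  have key : ∀ m : ℕ, Bispecial a (a+1) (List.replicate (m+1) c) →
      mult a (a+1) (List.replicate (m+1) c) = 0 := by
    intro m hbs
    rcases hc with rfl | rfl
    · have hb := hbs.2.1
      rw [← List.replicate_succ] at hb
      have := fsmooth_rep_bound hb
      exact mult_rep_a ha (by omega)
    · have hb := hbs.2.2.1
      rw [← List.replicate_succ] at hb
      have := fsmooth_rep_bound hb
      exact mult_rep_b ha (by omega)
  constructor
  · constructor
    · rintro ⟨hbs, hm⟩
      by_contra hn
      obtain ⟨m, rfl⟩ : ∃ m, n = m + 1 := ⟨n - 1, by omega⟩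
      rw [key m hbs] at hm
      norm_num at hm
    · rintro rfl
      rw [List.replicate_zero]
      exact ⟨bisp_nil ha, mult_nil ha⟩
  · rintro ⟨hbs, hm⟩
    cases n with
    | zero => rw [List.replicate_zero, mult_nil ha] at hm; norm_num at hm
    | succ m => rw [key m hbs] at hm; norm_num at hm


end SmoothWords
end

section
/- Every f-smooth word over {a,b} occurs as a factor of some r-smooth word: for all u ∈ C_f^∞ there exists v with |v| ≥ a + b such that vu ∈ C_r^∞. -/
namespace SmoothWords

-- === auxiliary development ===

def ofRuns : List (ℕ × ℕ) → List ℕ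
  | [] => []
  | (c, k) :: t => List.replicate k c ++ ofRuns t

lemma runs_cons_s10 (c : ℕ) (t : List ℕ) : ∃ k r, runs (c :: t) = (c, k) :: r ∧ 1 ≤ k := by
  show ∃ k r, (match runs t with
    | [] => [(c, 1)]
    | (d, k) :: r => if c = d then (c, k + 1) :: r else (c, 1) :: (d, k) :: r) = (c, k) :: r ∧ 1 ≤ k
  rcases h : runs t with _ | ⟨⟨d, k⟩, r⟩
  · exact ⟨1, [], rfl, le_refl _⟩
  · by_cases hcd : c = d
    · subst hcd; exact ⟨k + 1, r, by simp, by omega⟩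
    · exact ⟨1, (d, k) :: r, by simp [hcd], le_refl _⟩

lemma runs_eq_nil_iff (u : List ℕ) : runs u = [] ↔ u = [] := by
  cases u with
  | nil => simp [runs]
  | cons c t =>
    obtain ⟨k, r, hr, -⟩ := runs_cons_s10 c t
    simp [hr]

lemma ofRuns_runs (u : List ℕ) : ofRuns (runs u) = u := by
  induction u with
  | nil => rfl
  | cons c t ih =>
    show ofRuns (match runs t with
      | [] => [(c, 1)]
      | (d, k) :: r => if c = d then (c, k + 1) :: r else (c, 1) :: (d, k) :: r) = c :: t
    rcases h : runs t with _ | ⟨⟨d, k⟩, r⟩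
    · have : t = [] := (runs_eq_nil_iff t).mp h
      simp [this, ofRuns]
    · by_cases hcd : c = d
      · subst hcd
        rw [h] at ih
        simp only [if_pos rfl, ite_true, ofRuns]
        rw [List.replicate_succ]
        simpa [ofRuns] using congrArg (c :: ·) ih
      · rw [h] at ih
        simp only [if_neg hcd, ofRuns]
        simpa [ofRuns] using congrArg (c :: ·) ih

/-- the runs structure is "good": positive exponents and adjacent letters distinct -/
def Good (L : List (ℕ × ℕ)) : Prop :=
  (∀ p ∈ L, 1 ≤ p.2) ∧ L.Chain' (fun x y => x.1 ≠ y.1)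

lemma good_runs (u : List ℕ) : Good (runs u) := by
  induction u with
  | nil => exact ⟨by simp [runs], List.isChain_nil⟩
  | cons c t ih =>
    show Good (match runs t with
      | [] => [(c, 1)]
      | (d, k) :: r => if c = d then (c, k + 1) :: r else (c, 1) :: (d, k) :: r)
    rcases h : runs t with _ | ⟨⟨d, k⟩, r⟩
    · exact ⟨by simp, List.isChain_singleton _⟩
    · rw [h] at ih
      obtain ⟨ih1, ih2⟩ := ih
      by_cases hcd : c = d
      · subst hcd
        simp only [if_pos rfl]
        refine ⟨?_, ?_⟩
        · intro p hp
          rcases List.mem_cons.mp hp with rfl | hp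
          · omega
          · exact ih1 p (List.mem_cons_of_mem _ hp)
        · rcases List.isChain_cons.mp ih2 with ⟨h1, h2⟩
          exact List.isChain_cons.mpr ⟨h1, h2⟩
      · simp only [if_neg hcd]
        refine ⟨?_, ?_⟩
        · intro p hp
          rcases List.mem_cons.mp hp with rfl | hp
          · omega
          · exact ih1 p hp
        · exact List.isChain_cons_cons.mpr ⟨hcd, ih2⟩

lemma runs_fst_mem (u : List ℕ) : ∀ p ∈ runs u, p.1 ∈ u := by
  induction u with
  | nil => simp [runs]
  | cons c t ih =>
    intro p hp
    have hp' : p ∈ (match runs t with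
      | [] => [(c, 1)]
      | (d, k) :: r => if c = d then (c, k + 1) :: r else (c, 1) :: (d, k) :: r) := hp
    rcases h : runs t with _ | ⟨⟨d, k⟩, r⟩ <;> rw [h] at hp'
    · simp at hp'; simp [hp']
    · rw [h] at ih
      by_cases hcd : c = d
      · subst hcd
        simp only [if_pos rfl] at hp'
        rcases List.mem_cons.mp hp' with rfl | hp''
        · simp
        · exact List.mem_cons_of_mem _ (ih p (List.mem_cons_of_mem _ hp''))
      · simp only [if_neg hcd] at hp'
        rcases List.mem_cons.mp hp' with rfl | hp''
        · simp
        · exact List.mem_cons_of_mem _ (ih p hp'')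

lemma runs_head_fst (x : ℕ) (t : List ℕ) (d : ℕ) (k : ℕ) (r : List (ℕ × ℕ))
    (h : runs (x :: t) = (d, k) :: r) : d = x := by
  obtain ⟨k', r', hr, -⟩ := runs_cons_s10 x t
  rw [hr] at h; exact (Prod.mk.injEq _ _ _ _ ▸ (List.cons.injEq _ _ _ _ ▸ h).1).1.symm

lemma runs_replicate_append (c : ℕ) (k : ℕ) (t : List ℕ) (hk : 1 ≤ k)
    (ht : ∀ x ∈ t.head?, x ≠ c) : runs (List.replicate k c ++ t) = (c, k) :: runs t := by
  induction k with
  | zero => omega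
  | succ k ih =>
    rcases Nat.eq_or_lt_of_le hk with h1 | h1
    · have hk0 : k = 0 := by omega
      subst hk0
      show runs (c :: t) = (c, 1) :: runs t
      show (match runs t with
        | [] => [(c, 1)]
        | (d, k) :: r => if c = d then (c, k + 1) :: r else (c, 1) :: (d, k) :: r) = (c, 1) :: runs t
      rcases h : runs t with _ | ⟨⟨d, k'⟩, r⟩
      · rfl
      · have htne : t ≠ [] := by intro h0; rw [h0] at h; simp [runs] at h
        obtain ⟨x, t', rfl⟩ := List.exists_cons_of_ne_nil htne
        have hdx : d = x := runs_head_fst x t' d k' r h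
        have : x ≠ c := ht x rfl
        simp only [if_neg (show ¬ c = d by omega)]
    · have hk' : 1 ≤ k := by omega
      have ih' := ih hk'
      show runs (c :: (List.replicate k c ++ t)) = (c, k + 1) :: runs t
      show (match runs (List.replicate k c ++ t) with
        | [] => [(c, 1)]
        | (d, k) :: r => if c = d then (c, k + 1) :: r else (c, 1) :: (d, k) :: r)
        = (c, k + 1) :: runs t
      rw [ih']
      simp

/-- first run of `replicate m c ++ t` has exponent at least `m`. -/
lemma runs_replicate_prefix (c : ℕ) (m : ℕ) (t : List ℕ) (hm : 1 ≤ m) :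
    ∃ k r, runs (List.replicate m c ++ t) = (c, k) :: r ∧ m ≤ k := by
  induction m with
  | zero => omega
  | succ m ih =>
    rcases Nat.eq_or_lt_of_le hm with h1 | h1
    · have hm0 : m = 0 := by omega
      subst hm0
      obtain ⟨k, r, hr, hk⟩ := runs_cons_s10 c t
      exact ⟨k, r, hr, hk⟩
    · obtain ⟨k, r, hr, hk⟩ := ih (by omega)
      refine ⟨k + 1, r, ?_, by omega⟩
      show runs (c :: (List.replicate m c ++ t)) = (c, k + 1) :: r
      show (match runs (List.replicate m c ++ t) with
        | [] => [(c, 1)]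
        | (d, k) :: r => if c = d then (c, k + 1) :: r else (c, 1) :: (d, k) :: r)
        = (c, k + 1) :: r
      rw [hr]
      simp

lemma ofRuns_head? (L : List (ℕ × ℕ)) (hL : ∀ p ∈ L, 1 ≤ p.2) :
    (ofRuns L).head? = L.head?.map Prod.fst := by
  cases L with
  | nil => rfl
  | cons p t =>
    obtain ⟨c, k⟩ := p
    have hk : 1 ≤ k := hL (c, k) (by simp)
    obtain ⟨k', rfl⟩ : ∃ k', k = k' + 1 := ⟨k - 1, by omega⟩
    simp [ofRuns, List.replicate_succ]

lemma runs_ofRuns (L : List (ℕ × ℕ)) (hL : Good L) : runs (ofRuns L) = L := by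
  obtain ⟨h1, h2⟩ := hL
  induction L with
  | nil => rfl
  | cons p t ih =>
    obtain ⟨c, k⟩ := p
    have hk : 1 ≤ k := h1 (c, k) (by simp)
    have h1' : ∀ p ∈ t, 1 ≤ p.2 := fun p hp => h1 p (List.mem_cons_of_mem _ hp)
    have h2' : t.Chain' (fun x y => x.1 ≠ y.1) := (List.isChain_cons.mp h2).2
    have hhead : ∀ x ∈ (ofRuns t).head?, x ≠ c := by
      intro x hx
      rw [ofRuns_head? t h1'] at hx
      cases t with
      | nil => simp at hx
      | cons q s =>
        simp only [List.head?_cons, Option.map_some] at hx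
        have := (List.isChain_cons.mp h2).1 q rfl
        simp at hx
        omega
    show runs (List.replicate k c ++ ofRuns t) = (c, k) :: t
    rw [runs_replicate_append c k _ hk hhead, ih h1' h2']

lemma ofRuns_append (L M : List (ℕ × ℕ)) : ofRuns (L ++ M) = ofRuns L ++ ofRuns M := by
  induction L with
  | nil => rfl
  | cons p t ih => obtain ⟨c, k⟩ := p; simp [ofRuns, ih]

lemma length_ofRuns (L : List (ℕ × ℕ)) : (ofRuns L).length = (L.map Prod.snd).sum := by
  induction L with
  | nil => rfl
  | cons p t ih => obtain ⟨c, k⟩ := p; simp [ofRuns, ih]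

lemma mem_ofRuns (L : List (ℕ × ℕ)) (x : ℕ) (hx : x ∈ ofRuns L) : ∃ p ∈ L, x = p.1 := by
  induction L with
  | nil => simp [ofRuns] at hx
  | cons p t ih =>
    obtain ⟨c, k⟩ := p
    rcases List.mem_append.mp hx with h | h
    · exact ⟨(c, k), by simp, (List.eq_of_mem_replicate h)⟩
    · obtain ⟨q, hq, hq2⟩ := ih h
      exact ⟨q, List.mem_cons_of_mem _ hq, hq2⟩

/-- runs-list whose exponents, read from the right, are `l`, with last letter `d`. -/
def altRev (a b : ℕ) : ℕ → List ℕ → List (ℕ × ℕ)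
  | _, [] => []
  | d, q :: t => altRev a b (flip a b d) t ++ [(d, q)]

lemma flip_mem (a b d : ℕ) (hab : a ≠ b) (hd : d = a ∨ d = b) :
    (flip a b d = a ∨ flip a b d = b) ∧ flip a b d ≠ d := by
  rcases hd with rfl | rfl
  · simp [flip, hab]; omega
  · simp [flip, Ne.symm hab]; omega

lemma altRev_spec (a b : ℕ) (hab : a ≠ b) :
    ∀ (l : List ℕ) (d : ℕ) (M : List (ℕ × ℕ)),
    (d = a ∨ d = b) → (∀ q ∈ l, 1 ≤ q) →
    (∀ p ∈ M, 1 ≤ p.2) → M.Chain' (fun x y => x.1 ≠ y.1) →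
    (∀ p ∈ M, p.1 = a ∨ p.1 = b) → (∀ p ∈ M.head?, p.1 ≠ d) →
    Good (altRev a b d l ++ M) ∧
    (altRev a b d l ++ M).map Prod.snd = l.reverse ++ M.map Prod.snd ∧
    (∀ p ∈ altRev a b d l ++ M, p.1 = a ∨ p.1 = b) := by
  intro l
  induction l with
  | nil =>
    intro d M hd hl hM1 hM2 hM3 hM4
    exact ⟨⟨hM1, hM2⟩, by simp [altRev], hM3⟩
  | cons q t ih =>
    intro d M hd hl hM1 hM2 hM3 hM4
    have hq : 1 ≤ q := hl q (by simp)
    have hfl := flip_mem a b d hab hd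
    have step : altRev a b d (q :: t) ++ M = altRev a b (flip a b d) t ++ ((d, q) :: M) := by
      show (altRev a b (flip a b d) t ++ [(d, q)]) ++ M = _
      simp
    rw [step, show (q::t).reverse ++ M.map Prod.snd = t.reverse ++ ((d,q)::M).map Prod.snd by simp]
    refine ih (flip a b d) ((d, q) :: M) hfl.1 (fun x hx => hl x (List.mem_cons_of_mem _ hx))
      ?_ ?_ ?_ ?_
    · intro p hp
      rcases List.mem_cons.mp hp with rfl | hp
      · exact hq
      · exact hM1 p hp
    · refine List.isChain_cons.mpr ⟨?_, hM2⟩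
      intro y hy
      cases M with
      | nil => simp at hy
      | cons m s =>
        simp only [List.head?_cons, Option.mem_def, Option.some.injEq] at hy
        subst hy
        exact fun h => hM4 _ rfl h.symm
    · intro p hp
      rcases List.mem_cons.mp hp with rfl | hp
      · exact hd
      · exact hM3 p hp
    · intro p hp
      simp only [List.head?_cons, Option.mem_def, Option.some.injEq] at hp
      subst hp
      exact Ne.symm hfl.2

-- === derivative computation lemmas ===

lemma Dr_nil (a b : ℕ) : Dr a b [] = [] := rfl

lemma Dr_concat (a b : ℕ) (w : List ℕ) (X : List ℕ) (pn : ℕ) (h : exps w = X ++ [pn]) :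
    Dr a b w = X ++ cut a b pn := by
  show (match exps w with
    | [] => []
    | p :: rest =>
      (p :: rest).dropLast ++ cut a b ((p :: rest).getLast (List.cons_ne_nil _ _)))
    = X ++ cut a b pn
  rw [h]
  cases X with
  | nil => simp
  | cons x X' =>
    show (x :: (X' ++ [pn])).dropLast ++ cut a b ((x :: (X' ++ [pn])).getLast _) = _
    simp only [show x :: (X' ++ [pn]) = (x :: X') ++ [pn] by simp,
      List.dropLast_concat, List.getLast_concat]

lemma Df_single (a b : ℕ) (u : List ℕ) (p : ℕ) (h : exps u = [p]) :
    Df a b u = cut a b p := by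
  show (match exps u with
    | [] => []
    | [p] => cut a b p
    | p :: q :: rest =>
        cut a b p ++ (q :: rest).dropLast ++ cut a b ((q :: rest).getLast (List.cons_ne_nil _ _)))
    = cut a b p
  rw [h]

lemma Df_multi (a b : ℕ) (u : List ℕ) (p : ℕ) (X : List ℕ) (pn : ℕ)
    (h : exps u = p :: (X ++ [pn])) :
    Df a b u = cut a b p ++ X ++ cut a b pn := by
  show (match exps u with
    | [] => []
    | [p] => cut a b p
    | p :: q :: rest =>
        cut a b p ++ (q :: rest).dropLast ++ cut a b ((q :: rest).getLast (List.cons_ne_nil _ _)))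
    = cut a b p ++ X ++ cut a b pn
  rw [h]
  cases X with
  | nil => simp
  | cons x X' =>
    show cut a b p ++ (x :: (X' ++ [pn])).dropLast ++ cut a b ((x :: (X' ++ [pn])).getLast _) = _
    simp only [show x :: (X' ++ [pn]) = (x :: X') ++ [pn] by simp,
      List.dropLast_concat, List.getLast_concat]

lemma rsmooth_nil (a b : ℕ) : RSmooth a b [] := by
  intro n
  rw [Function.iterate_fixed (Dr_nil a b) n]
  exact ⟨by simp, by simp [exps, runs], by simp [exps, runs]⟩

lemma rsmooth_step (a b : ℕ) (w : List ℕ) (h1 : Cr1 a b w) (h2 : RSmooth a b (Dr a b w)) :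
    RSmooth a b w := by
  intro n
  cases n with
  | zero => exact h1
  | succ n => rw [Function.iterate_succ_apply]; exact h2 n

lemma fsmooth_Df (a b : ℕ) (u : List ℕ) (h : FSmooth a b u) : FSmooth a b (Df a b u) :=
  fun n => by rw [← Function.iterate_succ_apply]; exact h (n + 1)

lemma exps_length_sum (u : List ℕ) : u.length = (exps u).sum := by
  conv_lhs => rw [← ofRuns_runs u]
  rw [length_ofRuns]; rfl

lemma cut_length (a b p : ℕ) (ha : 1 ≤ a) (hp : 1 ≤ p) : (cut a b p).length < p := by
  unfold cut
  split <;> simp <;> omega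

lemma exps_pos (u : List ℕ) : ∀ p ∈ exps u, 1 ≤ p := by
  intro p hp
  obtain ⟨q, hq, rfl⟩ := List.mem_map.mp hp
  exact (good_runs u).1 q hq

lemma length_Df_lt (a b : ℕ) (ha : 1 ≤ a) (u : List ℕ) (hu : u ≠ []) :
    (Df a b u).length < u.length := by
  obtain ⟨c, t, rfl⟩ := List.exists_cons_of_ne_nil hu
  obtain ⟨p1, R, hruns⟩ : ∃ p1 R, runs (c :: t) = (c, p1) :: R := by
    obtain ⟨k, r, hr, -⟩ := runs_cons_s10 c t
    exact ⟨k, r, hr⟩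
  have hexps : exps (c :: t) = p1 :: R.map Prod.snd := by simp [exps, hruns]
  have hpos : ∀ p ∈ exps (c :: t), 1 ≤ p := exps_pos _
  have hp1 : 1 ≤ p1 := hpos p1 (by rw [hexps]; simp)
  have hlen : (c :: t).length = (exps (c :: t)).sum := exps_length_sum _
  cases hT : R.map Prod.snd with
  | nil =>
    rw [hT] at hexps
    rw [Df_single a b _ p1 hexps]
    have := cut_length a b p1 ha hp1
    rw [hlen, hexps]
    simpa using this
  | cons q T' =>
    have hne : q :: T' ≠ [] := List.cons_ne_nil _ _
    obtain ⟨X, pn, hXpn⟩ : ∃ X pn, q :: T' = X ++ [pn] :=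
      ⟨(q :: T').dropLast, (q :: T').getLast hne, (List.dropLast_append_getLast hne).symm⟩
    rw [hT, hXpn] at hexps
    rw [Df_multi a b _ p1 X pn hexps]
    have hpn : 1 ≤ pn := hpos pn (by rw [hexps]; simp)
    have h1 := cut_length a b p1 ha hp1
    have h2 := cut_length a b pn ha hpn
    have hX : X.length ≤ X.sum :=
      List.length_le_sum_of_one_le X (fun x hx => hpos x (by rw [hexps]; simp [hx]))
    rw [hlen, hexps]
    simp only [List.length_append, List.sum_cons, List.sum_append, List.sum_cons,
      List.length_cons, List.sum_nil, List.length_nil] at *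
    omega

lemma mul_length_le_sum (c : ℕ) (l : List ℕ) (h : ∀ x ∈ l, c ≤ x) :
    c * l.length ≤ l.sum := by
  induction l with
  | nil => simp
  | cons x t ih =>
    have hx := h x (by simp)
    have := ih (fun y hy => h y (List.mem_cons_of_mem _ hy))
    simp only [List.length_cons, List.sum_cons, Nat.mul_succ]
    omega

lemma sum_dropLast_ge (a b : ℕ) (ha : 1 ≤ a) (hab : a < b) (z w : List ℕ)
    (hz1 : ∀ x ∈ z, x = a ∨ x = b) (hlen : a + b + 1 ≤ z.length)
    (hexpsb : ∀ p ∈ exps (z ++ w), p ≤ b) :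
    a + b + 1 ≤ z.dropLast.sum := by
  have hzne : z ≠ [] := by
    intro h; rw [h] at hlen; simp only [List.length_nil] at hlen; omega
  have hy1 : ∀ x ∈ z.dropLast, x = a ∨ x = b :=
    fun x hx => hz1 x (List.dropLast_sublist z |>.mem hx)
  have hylen : z.dropLast.length = z.length - 1 := List.length_dropLast
  by_cases hb : ∃ x ∈ z.dropLast, x = b
  · obtain ⟨x, hx, rfl⟩ := hb
    obtain ⟨s, t, hst⟩ := List.append_of_mem hx
    have hs : s.length ≤ s.sum := List.length_le_sum_of_one_le s
      (fun y hy => by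
        have hym : y ∈ z.dropLast := by rw [hst]; exact List.mem_append_left _ hy
        rcases hy1 y hym with rfl | rfl <;> omega)
    have ht : t.length ≤ t.sum := List.length_le_sum_of_one_le t
      (fun y hy => by
        have hym : y ∈ z.dropLast := by rw [hst]; simp [hy]
        rcases hy1 y hym with rfl | rfl <;> omega)
    have : z.dropLast.sum = s.sum + x + t.sum := by
      rw [hst, List.sum_append, List.sum_cons]; omega
    have hlen2 : z.dropLast.length = s.length + 1 + t.length := by
      rw [hst, List.length_append, List.length_cons]; omega
    omega
  · have hya : ∀ x ∈ z.dropLast, x = a := by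
      intro x hx
      rcases hy1 x hx with h | h
      · exact h
      · exact absurd ⟨x, hx, h⟩ hb
    by_cases ha2 : 2 ≤ a
    · have := mul_length_le_sum a z.dropLast (fun x hx => (hya x hx).ge)
      have h2 : 2 * z.dropLast.length ≤ a * z.dropLast.length :=
        Nat.mul_le_mul_right _ ha2
      omega
    · -- a = 1 and all entries of z.dropLast are 1 : impossible
      have ha1 : a = 1 := by omega
      exfalso
      have hrep : z.dropLast = List.replicate z.dropLast.length a :=
        List.eq_replicate_of_mem hya
      have hsplit : z ++ w = z.dropLast ++ (z.getLast hzne :: w) := by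
        conv_lhs => rw [← List.dropLast_append_getLast hzne]
        simp
      have hm : 1 ≤ z.dropLast.length := by omega
      obtain ⟨k, r, hkr, hk⟩ :=
        runs_replicate_prefix a z.dropLast.length (z.getLast hzne :: w) hm
      have hexz : exps (z ++ w) = k :: r.map Prod.snd := by
        rw [hsplit, hrep]
        show (runs _).map Prod.snd = _
        rw [hkr]
        rfl
      have := hexpsb k (by rw [hexz]; simp)
      omega

lemma length_le_sum_ab (a b : ℕ) (ha : 1 ≤ a) (hab : a < b) (l : List ℕ)
    (hl : ∀ x ∈ l, x = a ∨ x = b) : l.length ≤ l.sum :=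
  List.length_le_sum_of_one_le l (fun x hx => by rcases hl x hx with rfl | rfl <;> omega)

lemma rsmooth_base (a b : ℕ) (ha : 1 ≤ a) (hab : a < b) :
    RSmooth a b (List.replicate b a ++ List.replicate b b) := by
  have hb1 : 1 ≤ b := by omega
  have hb2 : 2 ≤ b := by omega
  have hr2 : runs (List.replicate b b) = [(b, b)] := by
    have := runs_replicate_append b b [] hb1 (by simp)
    simpa [runs] using this
  have hhead : ∀ x ∈ (List.replicate b b).head?.toList, True := by simp
  have hrephead : (List.replicate b b).head? = some b := by
    obtain ⟨m, rfl⟩ : ∃ m, b = m + 1 := ⟨b - 1, by omega⟩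
    simp [List.replicate_succ]
  have hr1 : runs (List.replicate b a ++ List.replicate b b) = [(a, b), (b, b)] := by
    rw [runs_replicate_append a b _ hb1 (by rw [hrephead]; intro x hx; simp at hx; omega), hr2]
  have hexps1 : exps (List.replicate b a ++ List.replicate b b) = [b, b] := by
    simp [exps, hr1]
  have hw1 : Dr a b (List.replicate b a ++ List.replicate b b) = [b, b] := by
    rw [Dr_concat a b _ [b] b (by rw [hexps1]; rfl)]
    simp [cut, show ¬ b ≤ a by omega]
  have hrbb : runs [b, b] = [(b, 2)] := by
    have h2 : List.replicate 2 b ++ ([] : List ℕ) = [b, b] := by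
      simp [List.replicate]
    have := runs_replicate_append b 2 [] (by omega) (by simp)
    rw [h2] at this
    simpa [runs] using this
  have hexps2 : exps [b, b] = [2] := by simp [exps, hrbb]
  have hw2 : Dr a b [b, b] = cut a b 2 := by
    rw [Dr_concat a b _ [] 2 (by rw [hexps2]; rfl)]
    simp
  have hCr1 : Cr1 a b (List.replicate b a ++ List.replicate b b) := by
    refine ⟨?_, ?_, ?_⟩
    · intro c hc
      rcases List.mem_append.mp hc with h | h
      · left; exact List.eq_of_mem_replicate h
      · right; exact List.eq_of_mem_replicate h
    · rw [hexps1]; intro p hp; simp at hp; omega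
    · rw [hexps1]; intro p hp; simp at hp; omega
  have hCr2 : Cr1 a b [b, b] := by
    refine ⟨?_, ?_, ?_⟩
    · intro c hc; simp at hc; omega
    · rw [hexps2]; intro p hp; simp at hp; omega
    · rw [hexps2]; intro p hp; simp at hp
  refine rsmooth_step a b _ hCr1 ?_
  rw [hw1]
  refine rsmooth_step a b _ hCr2 ?_
  rw [hw2]
  by_cases h2a : 2 ≤ a
  · rw [show cut a b 2 = [] by simp [cut, h2a]]
    exact rsmooth_nil a b
  · rw [show cut a b 2 = [b] by simp [cut]; omega]
    have hrb : runs [b] = [(b, 1)] := by simp [runs]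
    have hexps3 : exps [b] = [1] := by simp [exps, hrb]
    refine rsmooth_step a b _ ⟨?_, ?_, ?_⟩ ?_
    · intro c hc; simp at hc; omega
    · rw [hexps3]; intro p hp; simp at hp; omega
    · rw [hexps3]; intro p hp; simp at hp
    · rw [Dr_concat a b _ [] 1 (by rw [hexps3]; rfl),
        show cut a b 1 = [] by simp [cut]; omega]
      exact rsmooth_nil a b

lemma altRev_map_snd (a b : ℕ) : ∀ (l : List ℕ) (d : ℕ),
    (altRev a b d l).map Prod.snd = l.reverse := by
  intro l
  induction l with
  | nil => intro d; rfl
  | cons q t ih =>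
    intro d
    show ((altRev a b (flip a b d) t ++ [(d, q)]).map Prod.snd) = (q :: t).reverse
    rw [List.map_append, ih]
    simp

lemma build (a b : ℕ) (ha : 1 ≤ a) (hab : a < b) (u : List ℕ) (c1 p1 : ℕ)
    (R : List (ℕ × ℕ)) (y : List ℕ) (e1 : ℕ)
    (hruns : runs u = (c1, p1) :: R)
    (hlet : ∀ c ∈ u, c = a ∨ c = b)
    (hle : ∀ p ∈ exps u, p ≤ b)
    (hinner : ∀ p ∈ ((exps u).drop 1).dropLast, p = a ∨ p = b)
    (hy : ∀ x ∈ y, x = a ∨ x = b)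
    (he1 : e1 = a ∨ e1 = b)
    (hp1e1 : p1 ≤ e1) :
    ∃ v : List ℕ, v.length = y.sum + (e1 - p1) ∧
      exps (v ++ u) = y ++ e1 :: R.map Prod.snd ∧
      Cr1 a b (v ++ u) := by
  have hab' : a ≠ b := by omega
  have hexps : exps u = p1 :: R.map Prod.snd := by simp [exps, hruns]
  obtain ⟨hpos, hchain⟩ := (hruns ▸ good_runs u : Good ((c1, p1) :: R))
  have hp1 : 1 ≤ p1 := hpos (c1, p1) (by simp)
  have hc1 : c1 = a ∨ c1 = b := hlet c1 (runs_fst_mem u (c1, p1) (by rw [hruns]; simp))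
  have hflip := flip_mem a b c1 hab' hc1
  have hMlet : ∀ p ∈ (c1, e1) :: R, p.1 = a ∨ p.1 = b := by
    intro p hp
    rcases List.mem_cons.mp hp with rfl | hp
    · exact hc1
    · exact hlet p.1 (runs_fst_mem u p (by rw [hruns]; exact List.mem_cons_of_mem _ hp))
  have hMpos : ∀ p ∈ (c1, e1) :: R, 1 ≤ p.2 := by
    intro p hp
    rcases List.mem_cons.mp hp with rfl | hp
    · show 1 ≤ e1; rcases he1 with rfl | rfl <;> omega
    · exact hpos p (List.mem_cons_of_mem _ hp)
  have hMchain : ((c1, e1) :: R).Chain' (fun x y => x.1 ≠ y.1) := by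
    rcases List.isChain_cons.mp hchain with ⟨h1, h2⟩
    exact List.isChain_cons.mpr ⟨h1, h2⟩
  have hMhead : ∀ p ∈ ((c1, e1) :: R).head?, p.1 ≠ flip a b c1 := by
    intro p hp
    simp only [List.head?_cons, Option.mem_def, Option.some.injEq] at hp
    subst hp
    exact Ne.symm hflip.2
  have hyrev : ∀ q ∈ y.reverse, 1 ≤ q := by
    intro q hq
    rcases hy q (List.mem_reverse.mp hq) with rfl | rfl <;> omega
  obtain ⟨hGoodL, hmapL, hletL⟩ := altRev_spec a b hab' y.reverse (flip a b c1)
    ((c1, e1) :: R) hflip.1 hyrev hMpos hMchain hMlet hMhead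
  have hvu : (ofRuns (altRev a b (flip a b c1) y.reverse) ++ List.replicate (e1 - p1) c1) ++ u
      = ofRuns (altRev a b (flip a b c1) y.reverse ++ ((c1, e1) :: R)) := by
    rw [ofRuns_append]
    conv_lhs => rw [← ofRuns_runs u, hruns]
    rw [show ofRuns ((c1, p1) :: R) = List.replicate p1 c1 ++ ofRuns R from rfl,
      show ofRuns ((c1, e1) :: R) = List.replicate e1 c1 ++ ofRuns R from rfl]
    have hsplit : List.replicate e1 c1 = List.replicate (e1 - p1) c1 ++ List.replicate p1 c1 := by
      rw [← List.replicate_add]; congr 1; omega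
    conv_rhs => rw [hsplit]
    simp only [List.append_assoc]
  have hrunsvu : runs ((ofRuns (altRev a b (flip a b c1) y.reverse)
      ++ List.replicate (e1 - p1) c1) ++ u)
      = altRev a b (flip a b c1) y.reverse ++ ((c1, e1) :: R) := by
    rw [hvu]; exact runs_ofRuns _ hGoodL
  have hexpsvu : exps ((ofRuns (altRev a b (flip a b c1) y.reverse)
      ++ List.replicate (e1 - p1) c1) ++ u) = y ++ e1 :: R.map Prod.snd := by
    show (runs _).map Prod.snd = _
    rw [hrunsvu, hmapL]
    simp
  refine ⟨ofRuns (altRev a b (flip a b c1) y.reverse) ++ List.replicate (e1 - p1) c1,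
    ?_, hexpsvu, ?_⟩
  · -- length
    rw [List.length_append, length_ofRuns, altRev_map_snd]
    simp
  · -- Cr1
    refine ⟨?_, ?_, ?_⟩
    · intro x hx
      rw [hvu] at hx
      obtain ⟨p, hpL, rfl⟩ := mem_ofRuns _ x hx
      exact hletL p hpL
    · rw [hexpsvu]
      intro p hp
      rcases List.mem_append.mp hp with h | h
      · rcases hy p h with rfl | rfl <;> omega
      · rcases List.mem_cons.mp h with rfl | h
        · rcases he1 with rfl | rfl <;> omega
        · exact hle p (by rw [hexps]; exact List.mem_cons_of_mem _ h)
    · rw [hexpsvu]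
      intro p hp
      cases hT : R.map Prod.snd with
      | nil =>
        rw [hT, List.dropLast_concat] at hp
        exact hy p hp
      | cons t T' =>
        rw [hT, List.dropLast_append_of_ne_nil (List.cons_ne_nil _ _)] at hp
        rcases List.mem_append.mp hp with h | h
        · exact hy p h
        · rcases List.mem_cons.mp (by
            have : (e1 :: t :: T').dropLast = e1 :: (t :: T').dropLast := rfl
            rw [this] at h; exact h) with rfl | h
          · exact he1
          · refine hinner p ?_
            rw [hexps, hT]
            simpa using h

lemma main_ext (a b : ℕ) (ha : 1 ≤ a) (hab : a < b) :
    ∀ N u, u.length ≤ N → FSmooth a b u →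
      ∃ v : List ℕ, a + b + 1 ≤ v.length ∧ RSmooth a b (v ++ u) := by
  intro N
  induction N with
  | zero =>
    intro u hlen _
    have hu : u = [] := List.length_eq_zero_iff.mp (by omega)
    subst hu
    refine ⟨List.replicate b a ++ List.replicate b b, by simp; omega, ?_⟩
    rw [List.append_nil]
    exact rsmooth_base a b ha hab
  | succ N ih =>
    intro u hlen hsm
    by_cases hu0 : u = []
    · subst hu0
      refine ⟨List.replicate b a ++ List.replicate b b, by simp; omega, ?_⟩
      rw [List.append_nil]
      exact rsmooth_base a b ha hab
    · obtain ⟨c, t, rfl⟩ := List.exists_cons_of_ne_nil hu0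
      obtain ⟨p1, R, hruns⟩ : ∃ p1 R, runs (c :: t) = (c, p1) :: R := by
        obtain ⟨k, r, hr, -⟩ := runs_cons_s10 c t
        exact ⟨k, r, hr⟩
      set u := c :: t with hu
      have hexps : exps u = p1 :: R.map Prod.snd := by simp [exps, hruns]
      obtain ⟨hlet, hle, hinner⟩ : Cf1 a b u := by simpa using hsm 0
      have hp1 : 1 ≤ p1 := exps_pos u p1 (by rw [hexps]; simp)
      have hp1b : p1 ≤ b := hle p1 (by rw [hexps]; simp)
      -- induction hypothesis applied to the derivative
      obtain ⟨z, hzlen, hzsm⟩ := ih (Df a b u)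
        (by have := length_Df_lt a b ha u hu0; omega) (fsmooth_Df a b u hsm)
      obtain ⟨hzlet', hzle', -⟩ : Cr1 a b (z ++ Df a b u) := by simpa using hzsm 0
      have hzlet : ∀ x ∈ z, x = a ∨ x = b :=
        fun x hx => hzlet' x (List.mem_append_left _ hx)
      have hzsum : z.length ≤ z.sum := length_le_sum_ab a b ha hab z hzlet
      rcases le_or_gt p1 a with hp1a | hp1a
      · -- first exponent small : cut p1 = []
        have hcut1 : cut a b p1 = [] := by simp [cut, hp1a]
        cases hT : R.map Prod.snd with
        | nil =>
          -- single run
          obtain ⟨v, hvlen, hvexps, hvCr⟩ := build a b ha hab u c p1 R z a hruns hlet hle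
            hinner hzlet (Or.inl rfl) hp1a
          refine ⟨v, by omega, ?_⟩
          refine rsmooth_step a b _ hvCr ?_
          have hDr : Dr a b (v ++ u) = z := by
            rw [Dr_concat a b _ z a (by rw [hvexps, hT])]
            simp [cut]
          rw [hDr]
          have hDf : Df a b u = [] := by
            rw [Df_single a b u p1 (by rw [hexps, hT]), hcut1]
          rw [hDf, List.append_nil] at hzsm
          exact hzsm
        | cons q T' =>
          -- at least two runs; strip the last element of z
          have hzne : z ≠ [] := by
            intro h; rw [h] at hzlen; simp only [List.length_nil] at hzlen; omega
          obtain ⟨y, e1, hz⟩ : ∃ y e1, z = y ++ [e1] :=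
            ⟨z.dropLast, z.getLast hzne, (List.dropLast_append_getLast hzne).symm⟩
          have he1 : e1 = a ∨ e1 = b := hzlet e1 (by rw [hz]; simp)
          have hy : ∀ x ∈ y, x = a ∨ x = b :=
            fun x hx => hzlet x (by rw [hz]; exact List.mem_append_left _ hx)
          have hp1e1 : p1 ≤ e1 := by rcases he1 with rfl | rfl <;> omega
          obtain ⟨X, pn, hXpn⟩ : ∃ X pn, q :: T' = X ++ [pn] :=
            ⟨(q :: T').dropLast, (q :: T').getLast (List.cons_ne_nil _ _),
              (List.dropLast_append_getLast _).symm⟩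
          obtain ⟨v, hvlen, hvexps, hvCr⟩ := build a b ha hab u c p1 R y e1 hruns hlet hle
            hinner hy he1 hp1e1
          have hysum : a + b + 1 ≤ y.sum := by
            have : y = z.dropLast := by rw [hz, List.dropLast_concat]
            rw [this]
            exact sum_dropLast_ge a b ha hab z (Df a b u) hzlet hzlen hzle'
          refine ⟨v, by omega, ?_⟩
          refine rsmooth_step a b _ hvCr ?_
          have hDr : Dr a b (v ++ u) = (y ++ e1 :: X) ++ cut a b pn := by
            refine Dr_concat a b _ (y ++ e1 :: X) pn ?_
            rw [hvexps, hT, hXpn]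
            simp
          have hDf : Df a b u = X ++ cut a b pn := by
            rw [Df_multi a b u p1 X pn (by rw [hexps, hT, hXpn]), hcut1]
            simp
          rw [hDr]
          have : (y ++ e1 :: X) ++ cut a b pn = z ++ Df a b u := by
            rw [hz, hDf]
            simp
          rw [this]
          exact hzsm
      · -- first exponent large : cut p1 = [b]
        have hcut1 : cut a b p1 = [b] := by simp [cut]; omega
        cases hT : R.map Prod.snd with
        | nil =>
          obtain ⟨v, hvlen, hvexps, hvCr⟩ := build a b ha hab u c p1 R z b hruns hlet hle
            hinner hzlet (Or.inr rfl) hp1b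
          refine ⟨v, by omega, ?_⟩
          refine rsmooth_step a b _ hvCr ?_
          have hDr : Dr a b (v ++ u) = z ++ [b] := by
            rw [Dr_concat a b _ z b (by rw [hvexps, hT])]
            rw [show cut a b b = [b] by unfold cut; rw [if_neg (by omega)]]
          have hDf : Df a b u = [b] := by
            rw [Df_single a b u p1 (by rw [hexps, hT]), hcut1]
          rw [hDr, ← hDf]
          exact hzsm
        | cons q T' =>
          obtain ⟨X, pn, hXpn⟩ : ∃ X pn, q :: T' = X ++ [pn] :=
            ⟨(q :: T').dropLast, (q :: T').getLast (List.cons_ne_nil _ _),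
              (List.dropLast_append_getLast _).symm⟩
          obtain ⟨v, hvlen, hvexps, hvCr⟩ := build a b ha hab u c p1 R z b hruns hlet hle
            hinner hzlet (Or.inr rfl) hp1b
          refine ⟨v, by omega, ?_⟩
          refine rsmooth_step a b _ hvCr ?_
          have hDr : Dr a b (v ++ u) = (z ++ b :: X) ++ cut a b pn := by
            refine Dr_concat a b _ (z ++ b :: X) pn ?_
            rw [hvexps, hT, hXpn]
            simp
          have hDf : Df a b u = [b] ++ X ++ cut a b pn := by
            rw [Df_multi a b u p1 X pn (by rw [hexps, hT, hXpn]), hcut1]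
          rw [hDr, show (z ++ b :: X) ++ cut a b pn = z ++ ([b] ++ X ++ cut a b pn) by simp,
            ← hDf]
          exact hzsm


theorem stmt10 (a b : ℕ) (ha : 1 ≤ a) (hab : a < b) (u : List ℕ)
    (hu : FSmooth a b u) :
    ∃ v : List ℕ, a + b ≤ v.length ∧ RSmooth a b (v ++ u) := by
  obtain ⟨v, h1, h2⟩ := main_ext a b ha hab u.length u le_rfl hu
  exact ⟨v, by omega, h2⟩

end SmoothWords
end
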